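/- Let m be a nonnegative integer and a, b, c ∈ ℝ. Define 𝔊(x,y,z) = a·Q_{2m+1}(x,y)·sin z + b·Q_{2m+1}(x,z)·sin y + c·Q_{2m}(y,z)·cos x, and let V be the vector field on ℝ³ given by V(x,y,z) = (𝔊(x,y,z), 𝔊(y,z,x), 𝔊(z,x,y)). Then ∇·V(x,y,z) = ((2m+1)·a + (−1)^{m+1}·(2m+1)·b − c)·(Q_{2m}(x,y)·sin z + Q_{2m}(y,z)·sin x + Q_{2m}(z,x)·sin y) for all (x,y,z) ∈ ℝ³. In particular, if (2m+1)·a + (−1)^{m+1}·(2m+1)·b − c = 0, then V is solenoidal: ∇·V = 0. -/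

import Mathlib

noncomputable section

open Real

/-- The standard harmonic polynomial `P_n(x,y) = Re((x+iy)^n)`. -/
def polyP (n : ℕ) (x y : ℝ) : ℝ := ((x + y * Complex.I) ^ n).re

/-- The standard harmonic polynomial `Q_n(x,y) = Im((x+iy)^n)`. -/
def polyQ (n : ℕ) (x y : ℝ) : ℝ := ((x + y * Complex.I) ^ n).im

/-- Partial derivative in the `i`-th coordinate direction. -/
def pd (i : Fin 3) (F : (Fin 3 → ℝ) → ℝ) : (Fin 3 → ℝ) → ℝ :=
  fun v => deriv (fun t => F (Function.update v i t)) (v i)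

/-- Divergence of a vector field on ℝ³. -/
def div3 (V : (Fin 3 → ℝ) → (Fin 3 → ℝ)) : (Fin 3 → ℝ) → ℝ :=
  fun v => pd 0 (fun w => V w 0) v + pd 1 (fun w => V w 1) v + pd 2 (fun w => V w 2) v

/-- Curl of a vector field on ℝ³. -/
def curl3 (V : (Fin 3 → ℝ) → (Fin 3 → ℝ)) : (Fin 3 → ℝ) → (Fin 3 → ℝ) :=
  fun v => ![pd 1 (fun w => V w 2) v - pd 2 (fun w => V w 1) v,
             pd 2 (fun w => V w 0) v - pd 0 (fun w => V w 2) v,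
             pd 0 (fun w => V w 1) v - pd 1 (fun w => V w 0) v]

/-- Laplacian of a scalar function on ℝ³. -/
def lap3 (F : (Fin 3 → ℝ) → ℝ) : (Fin 3 → ℝ) → ℝ :=
  fun v => pd 0 (pd 0 F) v + pd 1 (pd 1 F) v + pd 2 (pd 2 F) v

lemma hasDerivAt_polyQ (n : ℕ) (y x : ℝ) :
    HasDerivAt (fun t => polyQ (n+1) t y) (((n:ℝ)+1) * polyQ n x y) x := by
  have h : HasDerivAt (fun t : ℝ => ((t : ℂ) + y * Complex.I) ^ (n+1))
      (((n:ℂ)+1) * ((x:ℂ) + y * Complex.I) ^ n) x := by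
    have := (((hasDerivAt_id ((x:ℂ))).add_const ((y:ℂ) * Complex.I)).pow (n+1)).comp_ofReal
    simpa using this
  have := Complex.imCLM.hasFDerivAt.comp_hasDerivAt x h
  simpa [polyQ, Complex.add_im, Complex.mul_im, Function.comp_def] using this

lemma polyQ_swap (m : ℕ) (x y : ℝ) : polyQ (2*m) y x = (-1:ℝ)^(m+1) * polyQ (2*m) x y := by
  unfold polyQ
  have h : ((y:ℂ) + x * Complex.I) = Complex.I * (starRingEnd ℂ) ((x:ℂ) + y * Complex.I) := by
    simp [Complex.ext_iff]
  have h2 : ((-1:ℂ))^m = (((-1:ℝ)^m : ℝ) : ℂ) := by push_cast; ring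
  rw [h, mul_pow, ← map_pow, pow_mul, Complex.I_sq, h2, Complex.im_ofReal_mul, Complex.conj_im]
  ring

/-- divergence of the combined field, and the solenoidality criterion. -/
theorem div_formula_combined (m : ℕ) (a b c : ℝ) :
    let G : ℝ → ℝ → ℝ → ℝ := fun x y z =>
      a * polyQ (2 * m + 1) x y * Real.sin z + b * polyQ (2 * m + 1) x z * Real.sin y
        + c * polyQ (2 * m) y z * Real.cos x
    let V : (Fin 3 → ℝ) → (Fin 3 → ℝ) := fun v =>
      ![G (v 0) (v 1) (v 2), G (v 1) (v 2) (v 0), G (v 2) (v 0) (v 1)]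
    (∀ v : Fin 3 → ℝ,
      div3 V v = ((2 * m + 1 : ℝ) * a + (-1 : ℝ) ^ (m + 1) * (2 * m + 1 : ℝ) * b - c) *
        (polyQ (2 * m) (v 0) (v 1) * Real.sin (v 2)
          + polyQ (2 * m) (v 1) (v 2) * Real.sin (v 0)
          + polyQ (2 * m) (v 2) (v 0) * Real.sin (v 1))) ∧
    ((2 * m + 1 : ℝ) * a + (-1 : ℝ) ^ (m + 1) * (2 * m + 1 : ℝ) * b - c = 0 →
      ∀ v : Fin 3 → ℝ, div3 V v = 0) := by
  intro G V
  have key : ∀ x y z : ℝ, deriv (fun t => G t y z) x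
      = ((2*(m:ℝ)+1) * a * polyQ (2*m) x y * Real.sin z
        + (2*(m:ℝ)+1) * b * polyQ (2*m) x z * Real.sin y
        - c * polyQ (2*m) y z * Real.sin x) := by
    intro x y z
    have h1 := ((hasDerivAt_polyQ (2*m) y x).const_mul a).mul_const (Real.sin z)
    have h2 := ((hasDerivAt_polyQ (2*m) z x).const_mul b).mul_const (Real.sin y)
    have h3 := (Real.hasDerivAt_cos x).const_mul (c * polyQ (2*m) y z)
    have h : HasDerivAt (fun t => G t y z)
        (a * (((2*m:ℕ):ℝ)+1) * polyQ (2*m) x y * Real.sin z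
          + b * (((2*m:ℕ):ℝ)+1) * polyQ (2*m) x z * Real.sin y
          + c * polyQ (2*m) y z * (-Real.sin x)) x := by
      have := (h1.add h2).add h3
      convert this using 1
      exacts [rfl, rfl, rfl, by ring]
    rw [h.deriv]
    push_cast
    ring
  have main : ∀ v : Fin 3 → ℝ,
      div3 V v = ((2 * m + 1 : ℝ) * a + (-1 : ℝ) ^ (m + 1) * (2 * m + 1 : ℝ) * b - c) *
        (polyQ (2 * m) (v 0) (v 1) * Real.sin (v 2)
          + polyQ (2 * m) (v 1) (v 2) * Real.sin (v 0)
          + polyQ (2 * m) (v 2) (v 0) * Real.sin (v 1)) := by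
    intro v
    have e0 : (fun t => V (Function.update v 0 t) 0) = fun t => G t (v 1) (v 2) := by
      funext t; simp [V, Function.update, Fin.ext_iff]
    have e1 : (fun t => V (Function.update v 1 t) 1) = fun t => G t (v 2) (v 0) := by
      funext t; simp [V, Function.update, Fin.ext_iff]
    have e2 : (fun t => V (Function.update v 2 t) 2) = fun t => G t (v 0) (v 1) := by
      funext t; simp [V, Function.update, Fin.ext_iff]
    rw [div3, pd, pd, pd, e0, e1, e2]
    rw [key (v 0) (v 1) (v 2), key (v 1) (v 2) (v 0), key (v 2) (v 0) (v 1)]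
    rw [polyQ_swap m (v 2) (v 0), polyQ_swap m (v 0) (v 1), polyQ_swap m (v 1) (v 2)]
    ring
  exact ⟨main, fun h v => by rw [main v, h, zero_mul]⟩
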